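/- If A strictly subsumes B (A ⊑ B but not B ⊑ A) via morphism h, then at least one of the following holds: (1) there is a path π ∈ Π(B) \ Π(A); (2) there is a node q ∈ Q_A with θ(q) strictly below θ(h(q)); (3) there are paths π₁, π₂ ∈ Π(A) with δ_A(q̄_A,π₁) ≠ δ_A(q̄_A,π₂) but δ_B(q̄_B,π₁) = δ_B(q̄_B,π₂). -/

import Mathlib

/-! Typed feature structures (TFSs), following Carpenter 1992.
`pathδ` extends the partial transition function `δ` to paths (lists of features). -/

variable {Nodes Feats Types : Type}

def pathδ (δ : Nodes → Feats → Option Nodes) : Nodes → List Feats → Option Nodes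
  | q, [] => some q
  | q, f :: π => (δ q f).bind fun q' => pathδ δ q' π

/-- A typed feature structure: a finite set of nodes `Q`, a root, and a partial
transition function `δ : Q × Feats ⇀ Q` (modelled as `none` outside its domain,
undefined outside `Q`), with every node reachable from the root. -/
structure TFS (Nodes Feats : Type) where
  Q : Finset Nodes
  root : Nodes
  root_mem : root ∈ Q
  δ : Nodes → Feats → Option Nodes
  dom : ∀ q f, (δ q f).isSome → q ∈ Q
  closed : ∀ q f q', δ q f = some q' → q' ∈ Q
  reach : ∀ q ∈ Q, ∃ π : List Feats, pathδ δ root π = some q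

/-- The set of paths defined from the root of `A`. -/
def TFS.Pi (A : TFS Nodes Feats) : Set (List Feats) :=
  {π | (pathδ A.δ A.root π).isSome}

/-- `A` is cyclic if some node returns to itself along a nonempty path. -/
def TFS.Cyclic (A : TFS Nodes Feats) : Prop :=
  ∃ q ∈ A.Q, ∃ α : List Feats, α ≠ [] ∧ pathδ A.δ q α = some q

def TFS.Acyclic (A : TFS Nodes Feats) : Prop := ¬ A.Cyclic

/-- A subsumption morphism from `A` to `B` w.r.t. the typing function `θ`:
maps root to root, maps `Q_A` into `Q_B`, is monotone on node types,
and commutes with the transition function. -/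
def IsMorphism [PartialOrder Types] (θ : Nodes → Types)
    (A B : TFS Nodes Feats) (h : Nodes → Nodes) : Prop :=
  h A.root = B.root ∧ (∀ q ∈ A.Q, h q ∈ B.Q) ∧ (∀ q ∈ A.Q, θ q ≤ θ (h q)) ∧
  ∀ q f q', A.δ q f = some q' → B.δ (h q) f = some (h q')

/-- `A` subsumes `B` iff some subsumption morphism from `A` to `B` exists. -/
def Subsumes [PartialOrder Types] (θ : Nodes → Types) (A B : TFS Nodes Feats) : Prop :=
  ∃ h, IsMorphism θ A B h

/-- Strict subsumption: `A ⊏ B` iff `A ⊑ B` and not `B ⊑ A`. -/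
def StrictlySubsumes [PartialOrder Types] (θ : Nodes → Types) (A B : TFS Nodes Feats) : Prop :=
  Subsumes θ A B ∧ ¬ Subsumes θ B A


theorem pathδ_mem (A : TFS Nodes Feats) {q p : Nodes} {π : List Feats}
    (hq : q ∈ A.Q) (hp : pathδ A.δ q π = some p) : p ∈ A.Q := by
  induction π generalizing q with
  | nil => simp [pathδ] at hp; subst hp; exact hq
  | cons f π ih =>
    simp only [pathδ, Option.bind_eq_some_iff] at hp
    obtain ⟨q', hq', hp⟩ := hp
    exact ih (A.closed _ _ _ hq') hp

theorem pathδ_morph [PartialOrder Types] {θ : Nodes → Types} {A B : TFS Nodes Feats}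
    {h : Nodes → Nodes} (hm : IsMorphism θ A B h) {q p : Nodes} {π : List Feats}
    (hp : pathδ A.δ q π = some p) : pathδ B.δ (h q) π = some (h p) := by
  induction π generalizing q with
  | nil => simp [pathδ] at hp ⊢; rw [hp]
  | cons f π ih =>
    simp only [pathδ, Option.bind_eq_some_iff] at hp ⊢
    obtain ⟨q', hq', hp⟩ := hp
    exact ⟨h q', hm.2.2.2 _ _ _ hq', ih hp⟩

theorem pathδ_append (δ : Nodes → Feats → Option Nodes) (q : Nodes) (π ρ : List Feats) :
    pathδ δ q (π ++ ρ) = (pathδ δ q π).bind fun p => pathδ δ p ρ := by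
  induction π generalizing q with
  | nil => simp [pathδ]
  | cons f π ih =>
    simp only [List.cons_append, pathδ, Option.bind_assoc]
    cases δ q f with
    | none => simp
    | some q' => simp [ih]

/-- If `A` strictly subsumes `B` via morphism `h`, then either (1) `B` has a
path that `A` lacks, or (2) some node of `A` has a strictly more specific image type,
or (3) `B` has a reentrancy that `A` lacks. -/
theorem strict_subsumption_trichotomy [PartialOrder Types] (θ : Nodes → Types)
    (A B : TFS Nodes Feats) (h : Nodes → Nodes)
    (hm : IsMorphism θ A B h) (hstrict : ¬ Subsumes θ B A) :
    (∃ π, π ∈ B.Pi ∧ π ∉ A.Pi) ∨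
    (∃ q ∈ A.Q, θ q < θ (h q)) ∨
    (∃ π₁ π₂, π₁ ∈ A.Pi ∧ π₂ ∈ A.Pi ∧
      pathδ A.δ A.root π₁ ≠ pathδ A.δ A.root π₂ ∧
      pathδ B.δ B.root π₁ = pathδ B.δ B.root π₂) := by
  classical
  by_contra hcon
  push_neg at hcon
  obtain ⟨h1, h2, h3⟩ := hcon
  apply hstrict
  -- define the inverse map g
  set g : Nodes → Nodes := fun q' =>
    if hq : ∃ π, pathδ B.δ B.root π = some q' then
      (pathδ A.δ A.root hq.choose).get
        (h1 hq.choose (by simp [TFS.Pi, hq.choose_spec])) else q' with hg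
  have key : ∀ q' π, pathδ B.δ B.root π = some q' → pathδ A.δ A.root π = some (g q') := by
    intro q' π hπ
    have hq : ∃ π, pathδ B.δ B.root π = some q' := ⟨π, hπ⟩
    have hA0 : π ∈ A.Pi := h1 π (by simp [TFS.Pi, hπ])
    have hA1 : hq.choose ∈ A.Pi :=
      h1 hq.choose (by simp [TFS.Pi, hq.choose_spec])
    have hBeq : pathδ B.δ B.root π = pathδ B.δ B.root hq.choose := by
      rw [hπ, hq.choose_spec]
    have hAeq : pathδ A.δ A.root π = pathδ A.δ A.root hq.choose := by
      by_contra hne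
      exact h3 π hq.choose hA0 hA1 hne hBeq
    rw [hAeq, hg]
    simp only [hq, dif_pos]
    exact (Option.some_get _).symm
  refine ⟨g, ?_, ?_, ?_, ?_⟩
  · have := key B.root [] (by simp [pathδ])
    simpa [pathδ] using this.symm
  · intro q' hq'
    obtain ⟨π, hπ⟩ := B.reach q' hq'
    exact pathδ_mem A A.root_mem (key q' π hπ)
  · intro q' hq'
    obtain ⟨π, hπ⟩ := B.reach q' hq'
    have hA := key q' π hπ
    have hgQ : g q' ∈ A.Q := pathδ_mem A A.root_mem hA
    have hB : pathδ B.δ (h A.root) π = some (h (g q')) := pathδ_morph hm hA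
    rw [hm.1, hπ] at hB
    have hfix : q' = h (g q') := by injection hB
    have hle : θ (g q') ≤ θ (h (g q')) := hm.2.2.1 _ hgQ
    have hnlt : ¬ θ (g q') < θ (h (g q')) := h2 _ hgQ
    have heq : θ (g q') = θ (h (g q')) := hle.lt_or_eq.resolve_left hnlt
    exact le_of_eq ((congrArg θ hfix).trans heq.symm)
  · intro q' f q'' hδ
    have hq' : q' ∈ B.Q := B.dom q' f (by simp [hδ])
    obtain ⟨π, hπ⟩ := B.reach q' hq'
    have hπ' : pathδ B.δ B.root (π ++ [f]) = some q'' := by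
      rw [pathδ_append, hπ]
      simp [pathδ, hδ]
    have hA1 := key q' π hπ
    have hA2 := key q'' (π ++ [f]) hπ'
    rw [pathδ_append, hA1] at hA2
    simpa [pathδ] using hA2
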